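/- Let a ≥ r > 0 and suppose r ≥ 4√((cosh R + 1)/(cosh R − 1))·cosh T and |a − r| ≤ √(cosh²R − 1)/(4 cosh T) for some R > 0, T ≥ 1 with a/r ≤ cosh R and a ≠ r. Define u± = (√(cosh²R − 1) ± √(cosh²R − (a/r)²))/(a/r − 1). Then u₋ ≤ r/(4 cosh T) and 4r cosh T ≤ u₊. -/

import Mathlib

set_option maxHeartbeats 1000000


theorem stmt8 (a r R T : ℝ) (hr : 0 < r) (hra : r ≤ a) (hR : 0 < R) (hT : 1 ≤ T)
    (hcr : a / r ≤ Real.cosh R) (hne : a ≠ r)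
    (h1 : 4 * Real.sqrt ((Real.cosh R + 1) / (Real.cosh R - 1)) * Real.cosh T ≤ r)
    (h2 : |a - r| ≤ Real.sqrt (Real.cosh R ^ 2 - 1) / (4 * Real.cosh T)) :
    (Real.sqrt (Real.cosh R ^ 2 - 1) - Real.sqrt (Real.cosh R ^ 2 - (a / r) ^ 2)) /
        (a / r - 1) ≤ r / (4 * Real.cosh T) ∧
    4 * r * Real.cosh T ≤
      (Real.sqrt (Real.cosh R ^ 2 - 1) + Real.sqrt (Real.cosh R ^ 2 - (a / r) ^ 2)) /
        (a / r - 1) := by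
  have hc : 1 < Real.cosh R := by
    have := Real.one_lt_cosh (x := R)
    exact this.2 (ne_of_gt hR)
  have hK : 1 ≤ Real.cosh T := Real.one_le_cosh T
  have hK0 : (0:ℝ) < Real.cosh T := lt_of_lt_of_le one_pos hK
  have har : r < a := lt_of_le_of_ne hra (Ne.symm hne)
  have ht1 : 1 < a / r := (one_lt_div hr).2 har
  have ht0 : 0 < a / r - 1 := by linarith
  set c := Real.cosh R with hcdef
  set K := Real.cosh T with hKdef
  set t := a / r with htdef
  have ht0' : (0:ℝ) < t := by linarith
  have hS2 : (0:ℝ) < c^2 - 1 := by nlinarith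
  have hS'2 : (0:ℝ) ≤ c^2 - t^2 := by nlinarith
  set S := Real.sqrt (c^2 - 1) with hSdef
  set S' := Real.sqrt (c^2 - t^2) with hS'def
  have hS0 : 0 < S := Real.sqrt_pos.2 hS2
  have hS'0 : 0 ≤ S' := Real.sqrt_nonneg _
  have hSsq : S^2 = c^2 - 1 := Real.sq_sqrt hS2.le
  have hS'sq : S'^2 = c^2 - t^2 := Real.sq_sqrt hS'2
  have hdiff : (S - S') * (S + S') = t^2 - 1 := by nlinarith [hSsq, hS'sq]
  have habs : (a - r) * (4 * K) ≤ S := by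
    rw [abs_of_nonneg (by linarith)] at h2
    rwa [le_div_iff₀ (by positivity)] at h2
  have hc1 : c - 1 ≠ 0 := by linarith
  have hkey : 4 * K * (c + 1) ≤ r * S := by
    have hq : Real.sqrt ((c+1)/(c-1)) * S = c + 1 := by
      rw [hSdef, ← Real.sqrt_mul (div_nonneg (by linarith) (by linarith))]
      rw [show (c+1)/(c-1) * (c^2-1) = (c+1)^2 by field_simp; ring]
      exact Real.sqrt_sq (by linarith)
    nlinarith [h1, Real.sqrt_nonneg ((c+1)/(c-1)), hS0]
  have hrt : r * (t - 1) = a - r := by rw [htdef]; field_simp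
  clear_value c K t S S'
  constructor
  · rw [div_le_div_iff₀ ht0 (by positivity)]
    have hP : (0:ℝ) < S + S' := by linarith
    have step : (S - S') * (4 * K) * (S + S') ≤ r * (t - 1) * (S + S') := by
      nlinarith [mul_nonneg ht0.le (sub_nonneg.2 hkey),
        mul_nonneg (mul_nonneg (by linarith : (0:ℝ) ≤ 4*K) ht0.le) (sub_nonneg.2 hcr),
        mul_nonneg (mul_nonneg hr.le ht0.le) hS'0, hdiff]
    exact (mul_le_mul_iff_of_pos_right hP).1 step
  · rw [le_div_iff₀ ht0]
    nlinarith [habs, hS'0, hrt, hK0]
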